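/- Let p, K be positive integers with K ≤ p. Let B be a real p×K matrix with columns b̃₁, …, b̃_K such that Bᵀ B is a diagonal matrix and the column norms are nonincreasing: ‖b̃₁‖ ≥ ‖b̃₂‖ ≥ … ≥ ‖b̃_K‖. Let Σ_u be a real symmetric p×p matrix and set Σ = B Bᵀ + Σ_u, with eigenvalues λ₁ ≥ … ≥ λ_p. Suppose there is δ > 0 such that ‖b̃_j‖² − ‖b̃_{j+1}‖² ≥ δ for every 1 ≤ j < K, ‖b̃_K‖² ≥ δ, and ‖Σ_u‖ ≤ δ/4. Then for every j ≤ K there exists a unit vector ξ_j with Σ ξ_j = λ_j ξ_j such that ‖ξ_j − b̃_j/‖b̃_j‖‖ ≤ 2√2 · ‖Σ_u‖ / δ. -/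

import Mathlib

open Matrix BigOperators

/-- Spectral (operator) norm of a square real matrix (largest singular value). -/
noncomputable def specNorm {m : ℕ} (A : Matrix (Fin m) (Fin m) ℝ) : ℝ :=
  ‖Matrix.toEuclideanCLM (𝕜 := ℝ) A‖

/-- Euclidean norm of a vector in `ℝ^m`. -/
noncomputable def vecNorm {m : ℕ} (v : Fin m → ℝ) : ℝ :=
  Real.sqrt (∑ i, v i ^ 2)

section Aux

open Submodule Module
open scoped RealInnerProductSpace

variable {E : Type*} [NormedAddCommGroup E] [InnerProductSpace ℝ E] [FiniteDimensional ℝ E]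
variable {ι : Type*} [Fintype ι] [DecidableEq ι]

set_option linter.unusedSectionVars false

lemma aux_rayleigh_le (T : E →ₗ[ℝ] E) {w : ι → E} (hw : Orthonormal ℝ w)
    (s : Finset ι) (a : ι → ℝ) (c : ℝ)
    (heig : ∀ k ∈ s, T (w k) = a k • w k) (hc : ∀ k ∈ s, a k ≤ c)
    {x : E} (hx : x ∈ span ℝ (Set.range (fun k : s => w k))) :
    ⟪x, T x⟫ ≤ c * ‖x‖ ^ 2 := by
  obtain ⟨f, hf⟩ := (mem_span_range_iff_exists_fun ℝ).mp hx
  have hw' : Orthonormal ℝ (fun k : s => w k) := hw.comp _ Subtype.val_injective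
  have hTx : T x = ∑ k : s, (f k * a k) • (fun k : s => w k) k := by
    rw [← hf, map_sum]
    refine Finset.sum_congr rfl fun k _ => ?_
    rw [T.map_smul, heig k k.2, smul_smul]
  have h1 : ⟪x, T x⟫ = ∑ k : s, f k * (f k * a k) := by
    rw [hTx, ← hf]
    simpa using hw'.inner_sum f (fun k => f k * a k) Finset.univ
  have h2 : (‖x‖:ℝ) ^ 2 = ∑ k : s, f k * f k := by
    rw [← real_inner_self_eq_norm_sq, ← hf]
    simpa using hw'.inner_sum f f Finset.univ
  rw [h1, h2, Finset.mul_sum]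
  refine Finset.sum_le_sum fun k _ => ?_
  have := hc k k.2
  nlinarith [sq_nonneg (f k)]

lemma aux_rayleigh_ge (T : E →ₗ[ℝ] E) {w : ι → E} (hw : Orthonormal ℝ w)
    (s : Finset ι) (a : ι → ℝ) (c : ℝ)
    (heig : ∀ k ∈ s, T (w k) = a k • w k) (hc : ∀ k ∈ s, c ≤ a k)
    {x : E} (hx : x ∈ span ℝ (Set.range (fun k : s => w k))) :
    c * ‖x‖ ^ 2 ≤ ⟪x, T x⟫ := by
  have := aux_rayleigh_le (-T) hw s (-a) (-c)
    (fun k hk => by simp [heig k hk]) (fun k hk => neg_le_neg (hc k hk)) hx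
  simp only [LinearMap.neg_apply, inner_neg_right, Pi.neg_apply] at this
  linarith

lemma exists_ne_zero_mem_inf (S T : Submodule ℝ E)
    (h : finrank ℝ E < finrank ℝ S + finrank ℝ T) :
    ∃ x : E, x ≠ 0 ∧ x ∈ S ∧ x ∈ T := by
  have h1 := Submodule.finrank_sup_add_finrank_inf_eq S T
  have h2 : finrank ℝ ↥(S ⊔ T) ≤ finrank ℝ E := Submodule.finrank_le _
  have h3 : 0 < finrank ℝ ↥(S ⊓ T) := by omega
  have : Nontrivial ↥(S ⊓ T) := Module.nontrivial_of_finrank_pos h3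
  obtain ⟨x, hx⟩ := exists_ne (0 : ↥(S ⊓ T))
  refine ⟨x, by simpa using hx, x.2.1, x.2.2⟩

lemma weyl_one_sided {n : ℕ} (hn : finrank ℝ E = n)
    (T P : E →ₗ[ℝ] E) (u v : Fin n → E) (hu : Orthonormal ℝ u) (hv : Orthonormal ℝ v)
    (α β : Fin n → ℝ) (hα : Antitone α) (hβ : Antitone β)
    (hTu : ∀ k, T (u k) = α k • u k) (hTv : ∀ k, (T + P) (v k) = β k • v k)
    (ρ : ℝ) (hP : ∀ x : E, ⟪x, P x⟫ ≤ ρ * ‖x‖ ^ 2) (i : Fin n) :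
    β i ≤ α i + ρ := by
  have hfS : finrank ℝ (span ℝ (Set.range (fun k : (Finset.Iic i) => v k))) = (i : ℕ) + 1 := by
    have h := finrank_span_eq_card
      ((hv.comp ((↑) : (Finset.Iic i) → Fin n) Subtype.val_injective).linearIndependent)
    simp only [Function.comp_def] at h
    rw [h, Fintype.card_coe, Fin.card_Iic]
  have hfW : finrank ℝ (span ℝ (Set.range (fun k : (Finset.Ici i) => u k))) = n - (i : ℕ) := by
    have h := finrank_span_eq_card
      ((hu.comp ((↑) : (Finset.Ici i) → Fin n) Subtype.val_injective).linearIndependent)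
    simp only [Function.comp_def] at h
    rw [h, Fintype.card_coe, Fin.card_Ici]
  obtain ⟨x, hx0, hxS, hxW⟩ :=
    exists_ne_zero_mem_inf (span ℝ (Set.range (fun k : (Finset.Iic i) => v k)))
      (span ℝ (Set.range (fun k : (Finset.Ici i) => u k)))
      (by rw [hn, hfS, hfW]; have := i.2; omega)
  have h1 : β i * ‖x‖ ^ 2 ≤ ⟪x, (T + P) x⟫ :=
    aux_rayleigh_ge (T + P) hv (Finset.Iic i) β (β i) (fun k _ => hTv k)
      (fun k hk => hβ (Finset.mem_Iic.mp hk)) hxS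
  have h2 : ⟪x, T x⟫ ≤ α i * ‖x‖ ^ 2 :=
    aux_rayleigh_le T hu (Finset.Ici i) α (α i) (fun k _ => hTu k)
      (fun k hk => hα (Finset.mem_Ici.mp hk)) hxW
  have h3 : ⟪x, (T + P) x⟫ = ⟪x, T x⟫ + ⟪x, P x⟫ := by
    simp [inner_add_right]
  have h4 := hP x
  have hx2 : 0 < (‖x‖:ℝ) ^ 2 := by
    have : ‖x‖ ≠ 0 := norm_ne_zero_iff.mpr hx0
    positivity
  have : β i * ‖x‖ ^ 2 ≤ (α i + ρ) * ‖x‖ ^ 2 := by nlinarith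
  exact le_of_mul_le_mul_right (by linarith [this]) hx2

end Aux

section EHelpers

open scoped RealInnerProductSpace

/-- identify `Fin p → ℝ` with `EuclideanSpace ℝ (Fin p)` -/
noncomputable def toE {p : ℕ} (x : Fin p → ℝ) : EuclideanSpace ℝ (Fin p) :=
  (WithLp.equiv 2 _).symm x

/-- inverse identification -/
noncomputable def ofE {p : ℕ} (x : EuclideanSpace ℝ (Fin p)) : Fin p → ℝ :=
  (WithLp.equiv 2 _) x

variable {p : ℕ}

@[simp] lemma toE_ofE (x : EuclideanSpace ℝ (Fin p)) : toE (ofE x) = x := rfl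
@[simp] lemma ofE_toE (x : Fin p → ℝ) : ofE (toE x) = x := rfl
lemma toE_smul (c : ℝ) (x : Fin p → ℝ) : toE (c • x) = c • toE x := rfl
lemma toE_sub (x y : Fin p → ℝ) : toE (x - y) = toE x - toE y := rfl
lemma toE_add (x y : Fin p → ℝ) : toE (x + y) = toE x + toE y := rfl

lemma innerE (x y : EuclideanSpace ℝ (Fin p)) : ⟪x, y⟫ = ∑ i, ofE x i * ofE y i := by
  simp [ofE, PiLp.inner_apply, RCLike.inner_apply, conj_trivial]
  exact Finset.sum_congr rfl fun i _ => mul_comm _ _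

lemma normE (x : EuclideanSpace ℝ (Fin p)) : ‖x‖ = vecNorm (ofE x) := by
  rw [EuclideanSpace.norm_eq]
  simp [vecNorm, ofE, Real.norm_eq_abs, sq_abs]

lemma toEuclideanLin_eq (A : Matrix (Fin p) (Fin p) ℝ) (x : EuclideanSpace ℝ (Fin p)) :
    Matrix.toEuclideanLin A x = toE (A *ᵥ ofE x) := by
  simp [Matrix.toEuclideanLin_apply, toE, ofE]

lemma mulVec_norm_le (A : Matrix (Fin p) (Fin p) ℝ) (x : EuclideanSpace ℝ (Fin p)) :
    ‖toE (A *ᵥ ofE x)‖ ≤ specNorm A * ‖x‖ := by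
  have h : Matrix.toEuclideanCLM (𝕜 := ℝ) A x = toE (A *ᵥ ofE x) := by
    rw [show (Matrix.toEuclideanCLM (𝕜 := ℝ) A) x
        = (Matrix.toEuclideanCLM (𝕜 := ℝ) A : _ →ₗ[ℝ] _) x from rfl,
      Matrix.coe_toEuclideanCLM_eq_toEuclideanLin, toEuclideanLin_eq]
  rw [← h]
  exact (Matrix.toEuclideanCLM (𝕜 := ℝ) A).le_opNorm _

lemma specNorm_nonneg (A : Matrix (Fin p) (Fin p) ℝ) : 0 ≤ specNorm A := norm_nonneg _

lemma specNorm_neg (A : Matrix (Fin p) (Fin p) ℝ) : specNorm (-A) = specNorm A := by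
  unfold specNorm; rw [map_neg, norm_neg]

lemma inner_mulVec_le (A : Matrix (Fin p) (Fin p) ℝ) (x : EuclideanSpace ℝ (Fin p)) :
    ⟪x, Matrix.toEuclideanLin A x⟫ ≤ specNorm A * ‖x‖ ^ 2 := by
  rw [toEuclideanLin_eq]
  calc ⟪x, toE (A *ᵥ ofE x)⟫ ≤ ‖x‖ * ‖toE (A *ᵥ ofE x)‖ := real_inner_le_norm _ _
    _ ≤ ‖x‖ * (specNorm A * ‖x‖) := by
        have := mulVec_norm_le A x
        have h0 : (0:ℝ) ≤ ‖x‖ := norm_nonneg _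
        exact mul_le_mul_of_nonneg_left this h0
    _ = specNorm A * ‖x‖ ^ 2 := by ring

lemma symE {A : Matrix (Fin p) (Fin p) ℝ} (hA : A.IsHermitian)
    (x y : EuclideanSpace ℝ (Fin p)) :
    ⟪Matrix.toEuclideanLin A x, y⟫ = ⟪x, Matrix.toEuclideanLin A y⟫ := by
  rw [toEuclideanLin_eq, toEuclideanLin_eq, innerE, innerE]
  simp only [ofE_toE, Matrix.mulVec, dotProduct]
  simp only [Finset.sum_mul, Finset.mul_sum]
  rw [Finset.sum_comm]
  refine Finset.sum_congr rfl fun i _ => Finset.sum_congr rfl fun l _ => ?_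
  have hAe : A l i = A i l := by
    have := congrFun (congrFun hA i) l
    simpa [Matrix.conjTranspose_apply] using this
  rw [hAe]; ring

lemma parsevalE (b : OrthonormalBasis (Fin p) ℝ (EuclideanSpace ℝ (Fin p)))
    (v : EuclideanSpace ℝ (Fin p)) :
    ∑ k, ⟪b k, v⟫ ^ 2 = ‖v‖ ^ 2 := by
  have h1 : ‖b.repr v‖ = ‖v‖ := b.repr.norm_map v
  rw [← h1, EuclideanSpace.norm_eq, Real.sq_sqrt (by positivity)]
  exact Finset.sum_congr rfl fun k _ => by rw [b.repr_apply_apply]; simp [sq_abs]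

end EHelpers

open Submodule Module
open scoped RealInnerProductSpace

set_option maxHeartbeats 2000000 in
theorem stmt1 (p K : ℕ) (hp : 0 < p) (hK : 0 < K) (hKp : K ≤ p)
    (B : Matrix (Fin p) (Fin K) ℝ)
    (hdiag : (Bᵀ * B).IsDiag)
    (hmono : Antitone fun j : Fin K => Real.sqrt (∑ i, (B i j) ^ 2))
    (Su : Matrix (Fin p) (Fin p) ℝ) (hSu : Su.IsHermitian)
    (hS : (B * Bᵀ + Su).IsHermitian)
    (lam : Fin p → ℝ)
    (hlam : ∃ σ : Equiv.Perm (Fin p), lam = hS.eigenvalues ∘ σ)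
    (hanti : Antitone lam)
    (δ : ℝ) (hδ : 0 < δ)
    (hgap : ∀ (j : ℕ) (hj : j + 1 < K),
      δ ≤ (∑ i, (B i ⟨j, Nat.lt_of_succ_lt hj⟩) ^ 2) - ∑ i, (B i ⟨j + 1, hj⟩) ^ 2)
    (hlast : δ ≤ ∑ i, (B i ⟨K - 1, Nat.sub_lt hK Nat.one_pos⟩) ^ 2)
    (hsmall : specNorm Su ≤ δ / 4) :
    ∀ j : Fin K, ∃ ξ : Fin p → ℝ,
      vecNorm ξ = 1 ∧
      (B * Bᵀ + Su) *ᵥ ξ = lam (Fin.castLE hKp j) • ξ ∧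
      vecNorm (ξ - (vecNorm fun i => B i j)⁻¹ • fun i => B i j)
        ≤ 2 * Real.sqrt 2 * specNorm Su / δ := by
  classical
  obtain ⟨σ, hσ⟩ := hlam
  set ρ := specNorm Su with hρdef
  have hρ0 : (0:ℝ) ≤ ρ := specNorm_nonneg _
  -- column data
  set μ : Fin K → ℝ := fun a => ∑ i, B i a ^ 2 with hμdef
  have hμ0 : ∀ a, 0 ≤ μ a := fun a => Finset.sum_nonneg fun i _ => sq_nonneg _
  have hμanti : Antitone μ := by
    intro a b hab
    have h := hmono hab
    calc μ b = Real.sqrt (μ b) ^ 2 := (Real.sq_sqrt (hμ0 b)).symm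
      _ ≤ Real.sqrt (μ a) ^ 2 := by
          have h0 : 0 ≤ Real.sqrt (μ b) := Real.sqrt_nonneg _
          nlinarith
      _ = μ a := Real.sq_sqrt (hμ0 a)
  have hμδ : ∀ a, δ ≤ μ a := by
    intro a
    have h1 : μ a ≥ μ ⟨K - 1, Nat.sub_lt hK Nat.one_pos⟩ := by
      apply hμanti
      simp only [Fin.le_def]
      omega
    have h2 : δ ≤ μ ⟨K - 1, Nat.sub_lt hK Nat.one_pos⟩ := hlast
    linarith
  have hgap' : ∀ a b : Fin K, a < b → μ b + δ ≤ μ a := by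
    intro a b hab
    have hb0 : 1 ≤ (b:ℕ) := by
      have : (a:ℕ) < (b:ℕ) := hab
      omega
    have hb1 : (b:ℕ) - 1 + 1 < K := by have := b.2; omega
    have hg := hgap ((b:ℕ) - 1) hb1
    have hbeq : (⟨(b:ℕ) - 1 + 1, hb1⟩ : Fin K) = b := by
      apply Fin.ext; simp; omega
    have ha : a ≤ (⟨(b:ℕ) - 1, Nat.lt_of_succ_lt hb1⟩ : Fin K) := by
      simp only [Fin.le_def]
      have : (a:ℕ) < (b:ℕ) := hab
      omega
    have h2 := hμanti ha
    rw [hbeq] at hg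
    have : μ ⟨(b:ℕ) - 1, Nat.lt_of_succ_lt hb1⟩ = ∑ i, B i ⟨(b:ℕ) - 1, Nat.lt_of_succ_lt hb1⟩ ^ 2 := rfl
    have hμb : μ b = ∑ i, B i b ^ 2 := rfl
    simp only [hμdef] at h2 ⊢
    linarith [hg, h2]
  -- gap between distinct μ's
  have hμgap : ∀ a b : Fin K, a ≠ b → δ ≤ |μ a - μ b| := by
    intro a b hab
    rcases lt_or_gt_of_ne hab with h | h
    · have := hgap' a b h
      rw [abs_of_nonneg (by linarith)]
      linarith
    · have := hgap' b a h
      rw [abs_of_nonpos (by linarith)]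
      linarith
  -- matrices
  set A : Matrix (Fin p) (Fin p) ℝ := B * Bᵀ with hAdef
  have hAH : A.IsHermitian := by
    unfold Matrix.IsHermitian
    ext i l
    simp [hAdef, Matrix.conjTranspose_apply, Matrix.mul_apply, mul_comm]
  -- orthogonality of columns
  have hBtB : ∀ a b : Fin K, (Bᵀ * B) a b = ∑ l, B l a * B l b := by
    intro a b
    simp [Matrix.mul_apply, Matrix.transpose_apply]
  have hod : ∀ a b : Fin K, a ≠ b → ∑ l, B l a * B l b = 0 := by
    intro a b hab
    rw [← hBtB]
    exact hdiag hab
  have hdd : ∀ a : Fin K, ∑ l, B l a * B l a = μ a := by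
    intro a
    simp only [hμdef]
    exact Finset.sum_congr rfl fun l _ => (sq (B l a)).symm
  -- normalized columns
  set col : Fin K → (Fin p → ℝ) := fun a => fun i => B i a with hcoldef
  set u0 : Fin K → EuclideanSpace ℝ (Fin p) :=
    fun a => toE ((Real.sqrt (μ a))⁻¹ • col a) with hu0def
  have hsqrtpos : ∀ a : Fin K, 0 < Real.sqrt (μ a) :=
    fun a => Real.sqrt_pos.mpr (lt_of_lt_of_le hδ (hμδ a))
  have hu0inner : ∀ a b : Fin K, ⟪u0 a, u0 b⟫ =
      (Real.sqrt (μ a))⁻¹ * (Real.sqrt (μ b))⁻¹ * ∑ l, B l a * B l b := by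
    intro a b
    rw [hu0def, innerE]
    simp only [ofE_toE, Pi.smul_apply, smul_eq_mul, hcoldef]
    rw [Finset.mul_sum]
    exact Finset.sum_congr rfl fun l _ => by ring
  have hu0 : Orthonormal ℝ u0 := by
    rw [orthonormal_iff_ite]
    intro a b
    rw [hu0inner]
    by_cases hab : a = b
    · subst hab
      rw [hdd a, if_pos rfl]
      have hne := (hsqrtpos a).ne'
      have hms : Real.sqrt (μ a) * Real.sqrt (μ a) = μ a := Real.mul_self_sqrt (hμ0 a)
      rw [← hms]
      field_simp
      rw [Real.sqrt_sq (Real.sqrt_nonneg _)]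
    · rw [hod a b hab, if_neg hab, mul_zero]
  -- extend to orthonormal basis
  set sset : Set (Fin p) := {k : Fin p | (k : ℕ) < K} with hssetdef
  set vext : Fin p → EuclideanSpace ℝ (Fin p) :=
    fun k => if h : (k : ℕ) < K then u0 ⟨k, h⟩ else 0 with hvextdef
  have hrestr : Orthonormal ℝ (sset.restrict vext) := by
    rw [orthonormal_iff_ite]
    rintro ⟨a, ha⟩ ⟨b, hb⟩
    have h1 : sset.restrict vext ⟨a, ha⟩ = u0 ⟨a, ha⟩ := by
      simp only [Set.restrict_apply, hvextdef]
      exact dif_pos ha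
    have h2 : sset.restrict vext ⟨b, hb⟩ = u0 ⟨b, hb⟩ := by
      simp only [Set.restrict_apply, hvextdef]
      exact dif_pos hb
    rw [h1, h2]
    have h3 := (orthonormal_iff_ite (𝕜 := ℝ)).mp hu0 ⟨a, ha⟩ ⟨b, hb⟩
    rw [h3]
    congr 1
    simp only [eq_iff_iff]
    constructor
    · intro h; exact Subtype.ext (by simpa [Fin.ext_iff] using h)
    · intro h; exact Fin.ext (by simpa [Subtype.ext_iff, Fin.ext_iff] using h)
  obtain ⟨bb, hbb⟩ := hrestr.exists_orthonormalBasis_extension_of_card_eq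
    (by simp [finrank_euclideanSpace])
  have hbbmem : ∀ a : Fin K, bb (Fin.castLE hKp a) = u0 a := by
    intro a
    have ha : (Fin.castLE hKp a : Fin p) ∈ sset := a.2
    rw [hbb _ ha]
    simp only [hvextdef, dif_pos (show ((Fin.castLE hKp a : Fin p) : ℕ) < K from a.2)]
    exact congrArg u0 (Fin.ext rfl)
  -- eigenvalue function for A
  set α : Fin p → ℝ := fun k => if h : (k : ℕ) < K then μ ⟨k, h⟩ else 0 with hαdef
  have hαanti : Antitone α := by
    intro a b hab
    simp only [hαdef]
    by_cases ha : (a : ℕ) < K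
    · by_cases hb : (b : ℕ) < K
      · rw [dif_pos ha, dif_pos hb]
        exact hμanti (show (⟨a, ha⟩ : Fin K) ≤ ⟨b, hb⟩ from hab)
      · rw [dif_pos ha, dif_neg hb]
        exact hμ0 _
    · have hb : ¬ (b : ℕ) < K := fun h => ha (lt_of_le_of_lt (by exact_mod_cast hab) h)
      rw [dif_neg ha, dif_neg hb]
  -- key matrix computations
  have hmulBBt : ∀ (z : Fin p → ℝ) (i : Fin p),
      (A *ᵥ z) i = ∑ m : Fin K, B i m * (∑ l, B l m * z l) := by
    intro z i
    simp only [hAdef, Matrix.mulVec, dotProduct, Matrix.mul_apply,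
      Matrix.transpose_apply, Finset.sum_mul, Finset.mul_sum]
    rw [Finset.sum_comm]
    exact Finset.sum_congr rfl fun m _ => Finset.sum_congr rfl fun l _ => by ring
  have hkey : ∀ a : Fin K, A *ᵥ col a = μ a • col a := by
    intro a
    funext i
    rw [hmulBBt]
    rw [Finset.sum_eq_single a]
    · simp only [hcoldef, Pi.smul_apply, smul_eq_mul]
      rw [hdd a]; ring
    · intro m _ hm
      rw [show (∑ l, B l m * col a l) = ∑ l, B l m * B l a from rfl, hod m a hm, mul_zero]
    · intro h; exact absurd (Finset.mem_univ a) h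
  -- T on basis
  set T : EuclideanSpace ℝ (Fin p) →ₗ[ℝ] EuclideanSpace ℝ (Fin p) :=
    Matrix.toEuclideanLin A with hTdef
  set P : EuclideanSpace ℝ (Fin p) →ₗ[ℝ] EuclideanSpace ℝ (Fin p) :=
    Matrix.toEuclideanLin Su with hPdef
  have hTP : T + P = Matrix.toEuclideanLin (A + Su) := by
    rw [hTdef, hPdef, map_add]
  have hTu : ∀ k, T (bb k) = α k • bb k := by
    intro k
    by_cases hk : (k : ℕ) < K
    · set a : Fin K := ⟨k, hk⟩ with hadef
      have hbbk : bb k = u0 a := by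
        rw [hbb _ hk]
        simp only [hvextdef, dif_pos hk]
        rfl
      rw [hbbk, hαdef]
      simp only [dif_pos hk]
      rw [hTdef, hu0def]
      simp only
      rw [toEuclideanLin_eq, ofE_toE]
      rw [Matrix.mulVec_smul, hkey a, smul_comm]
      rw [toE_smul]
    · have hbbz : ∀ a : Fin K, ∑ l, B l a * ofE (bb k) l = 0 := by
        intro a
        have hne : Fin.castLE hKp a ≠ k := by
          intro h
          exact hk (h ▸ a.2)
        have h0 : ⟪bb (Fin.castLE hKp a), bb k⟫ = 0 := by
          have := (orthonormal_iff_ite (𝕜 := ℝ)).mp bb.orthonormal (Fin.castLE hKp a) k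
          rwa [if_neg hne] at this
        rw [hbbmem a, hu0def] at h0
        simp only at h0
        rw [innerE, ofE_toE] at h0
        have h1 : ∑ i, ((Real.sqrt (μ a))⁻¹ • col a) i * ofE (bb k) i
            = (Real.sqrt (μ a))⁻¹ * ∑ l, B l a * ofE (bb k) l := by
          rw [Finset.mul_sum]
          exact Finset.sum_congr rfl fun l _ => by
            simp only [Pi.smul_apply, smul_eq_mul, hcoldef]; ring
        rw [h1] at h0
        rcases mul_eq_zero.mp h0 with h | h
        · exact absurd h (inv_ne_zero (hsqrtpos a).ne')
        · exact h
      rw [hαdef]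
      simp only [dif_neg hk, zero_smul]
      rw [hTdef, toEuclideanLin_eq]
      have : A *ᵥ ofE (bb k) = 0 := by
        funext i
        rw [hmulBBt]
        simp only [Pi.zero_apply]
        refine Finset.sum_eq_zero fun m _ => ?_
        rw [hbbz m, mul_zero]
      rw [this]
      rfl
  -- eigen data for Sigma
  set v : Fin p → EuclideanSpace ℝ (Fin p) := fun k => hS.eigenvectorBasis (σ k) with hvdef
  have hvorth : Orthonormal ℝ v := hS.eigenvectorBasis.orthonormal.comp σ σ.injective
  have hmid : ∀ k, (A + Su) *ᵥ ofE (v k) = lam k • ofE (v k) := by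
    intro k
    have h := hS.mulVec_eigenvectorBasis (σ k)
    have hl : lam k = hS.eigenvalues (σ k) := by rw [hσ]; rfl
    rw [hl]
    exact h
  have hTv : ∀ k, (T + P) (v k) = lam k • v k := by
    intro k
    rw [hTP, toEuclideanLin_eq, hmid k, toE_smul, toE_ofE]
  have hfr : Module.finrank ℝ (EuclideanSpace ℝ (Fin p)) = p := by
    simp [finrank_euclideanSpace]
  -- Weyl inequalities
  have hPbnd : ∀ x : EuclideanSpace ℝ (Fin p), ⟪x, P x⟫ ≤ ρ * ‖x‖ ^ 2 := by
    intro x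
    exact inner_mulVec_le Su x
  have hPbnd' : ∀ x : EuclideanSpace ℝ (Fin p),
      ⟪x, (Matrix.toEuclideanLin (-Su)) x⟫ ≤ ρ * ‖x‖ ^ 2 := by
    intro x
    have := inner_mulVec_le (-Su) x
    rwa [specNorm_neg] at this
  have hw1 : ∀ i, lam i ≤ α i + ρ := by
    intro i
    exact weyl_one_sided hfr T P (⇑bb) v bb.orthonormal hvorth α lam hαanti hanti hTu hTv ρ hPbnd i
  have hw2 : ∀ i, α i ≤ lam i + ρ := by
    intro i
    refine weyl_one_sided hfr (Matrix.toEuclideanLin (A + Su)) (Matrix.toEuclideanLin (-Su))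
      v (⇑bb) hvorth bb.orthonormal lam α hanti hαanti
      (fun k => by rw [← hTP]; exact hTv k)
      (fun k => ?_) ρ hPbnd' i
    have hsum : Matrix.toEuclideanLin (A + Su) + Matrix.toEuclideanLin (-Su)
        = T := by
      rw [hTdef, ← map_add]
      congr 1
      abel
    rw [hsum]
    exact hTu k
  -- main argument
  intro j
  set j' : Fin p := Fin.castLE hKp j with hj'def
  have hαj' : α j' = μ j := by
    simp only [hαdef, dif_pos (show ((j' : Fin p) : ℕ) < K from j.2)]
    exact congrArg μ (Fin.ext rfl)
  have hwey : |lam j' - μ j| ≤ ρ := by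
    have h1 := hw1 j'
    have h2 := hw2 j'
    rw [hαj'] at h1 h2
    rw [abs_le]; constructor <;> linarith
  set ve : EuclideanSpace ℝ (Fin p) := v j' with hvedef
  have hvenorm : ‖ve‖ = 1 := hvorth.1 j'
  set c : Fin p → ℝ := fun k => ⟪bb k, ve⟫ with hcdef
  set w : EuclideanSpace ℝ (Fin p) := toE (Su *ᵥ ofE ve) with hwdef
  have hwnorm : ‖w‖ ≤ ρ := by
    have := mulVec_norm_le Su ve
    rwa [hvenorm, mul_one] at this
  set d : Fin p → ℝ := fun k => ⟪bb k, w⟫ with hddef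
  have heq : ∀ k, (lam j' - α k) * c k = d k := by
    intro k
    have h1 : ⟪bb k, (T + P) ve⟫ = lam j' * c k := by
      rw [show (T + P) ve = lam j' • ve from hTv j', real_inner_smul_right]
    have h2 : ⟪bb k, T ve⟫ = α k * c k := by
      rw [hTdef, ← symE hAH (bb k) ve, ← hTdef, hTu k, real_inner_smul_left]
    have h3 : ⟪bb k, (T + P) ve⟫ = ⟪bb k, T ve⟫ + ⟪bb k, P ve⟫ := by
      simp [inner_add_right]
    have h4 : P ve = w := by rw [hPdef, toEuclideanLin_eq]
    rw [h4, h1, h2] at h3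
    have hdk : d k = ⟪bb k, w⟫ := rfl
    have hexp : (lam j' - α k) * c k = lam j' * c k - α k * c k := by ring
    rw [hexp, hdk]
    linarith
  have hgapk : ∀ k : Fin p, k ≠ j' → δ / 2 ≤ |lam j' - α k| := by
    intro k hk
    by_cases hkK : (k : ℕ) < K
    · set a : Fin K := ⟨k, hkK⟩ with hadef
      have hαk : α k = μ a := by simp only [hαdef, dif_pos hkK]; rfl
      have haj : a ≠ j := by
        intro h
        apply hk
        apply Fin.ext
        have h' : (a : ℕ) = (j : ℕ) := congrArg Fin.val h
        simpa [hadef, hj'def] using h'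
      have hd := hμgap a j haj
      have habs : |μ j - μ a| ≤ |μ j - lam j'| + |lam j' - μ a| := abs_sub_le _ _ _
      have h5 : |μ j - lam j'| = |lam j' - μ j| := abs_sub_comm _ _
      have h6 : |μ a - μ j| = |μ j - μ a| := abs_sub_comm _ _
      rw [hαk]
      linarith [hwey, hsmall]
    · have hαk : α k = 0 := by simp only [hαdef, dif_neg hkK]
      rw [hαk, sub_zero]
      have h1 : μ j - ρ ≤ lam j' := by
        have := abs_le.mp hwey
        linarith [this.1]
      have h2 : δ / 2 ≤ lam j' := by linarith [hμδ j, hsmall]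
      calc δ / 2 ≤ lam j' := h2
        _ ≤ |lam j'| := le_abs_self _
  have hpar1 : ∑ k, c k ^ 2 = 1 := by
    simp only [hcdef]
    rw [parsevalE bb ve, hvenorm, one_pow]
  have hpar2 : ∑ k, d k ^ 2 ≤ ρ ^ 2 := by
    simp only [hddef]
    rw [parsevalE bb w]
    nlinarith [hwnorm, norm_nonneg w]
  set s2 : ℝ := ∑ k ∈ Finset.univ.erase j', c k ^ 2 with hs2def
  have hs2nn : 0 ≤ s2 := Finset.sum_nonneg fun k _ => sq_nonneg _
  have hcj2 : c j' ^ 2 = 1 - s2 := by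
    have h := Finset.add_sum_erase Finset.univ (fun k => c k ^ 2) (Finset.mem_univ j')
    rw [hpar1] at h
    rw [← hs2def] at h
    have h' : c j' ^ 2 + s2 = 1 := h
    linarith
  have hs2bnd : s2 ≤ 4 * ρ ^ 2 / δ ^ 2 := by
    have hsum : (δ / 2) ^ 2 * s2 ≤ ρ ^ 2 := by
      rw [hs2def, Finset.mul_sum]
      calc ∑ k ∈ Finset.univ.erase j', (δ / 2) ^ 2 * c k ^ 2
          ≤ ∑ k ∈ Finset.univ.erase j', d k ^ 2 := by
            refine Finset.sum_le_sum fun k hk => ?_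
            have hkne : k ≠ j' := Finset.ne_of_mem_erase hk
            have hg := hgapk k hkne
            have he := heq k
            have h1 : (δ / 2) ^ 2 ≤ (lam j' - α k) ^ 2 := by
              have := sq_abs (lam j' - α k)
              nlinarith [hg, hδ]
            calc (δ / 2) ^ 2 * c k ^ 2 ≤ (lam j' - α k) ^ 2 * c k ^ 2 := by
                  nlinarith [sq_nonneg (c k)]
              _ = ((lam j' - α k) * c k) ^ 2 := by ring
              _ = d k ^ 2 := by rw [he]
        _ ≤ ∑ k, d k ^ 2 := Finset.sum_le_sum_of_subset_of_nonneg
              (Finset.erase_subset _ _) (fun k _ _ => sq_nonneg _)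
        _ ≤ ρ ^ 2 := hpar2
    rw [le_div_iff₀ (by positivity : (0:ℝ) < δ ^ 2)]
    nlinarith [hsum]
  have hcj1 : c j' ^ 2 ≤ 1 := by linarith
  have habs1 : |c j'| ≤ 1 := by
    nlinarith [abs_nonneg (c j'), sq_abs (c j')]
  set ξ : Fin p → ℝ := if 0 ≤ c j' then ofE ve else -ofE ve with hξdef
  refine ⟨ξ, ?_, ?_, ?_⟩
  · have h1 : vecNorm (ofE ve) = 1 := by rw [← normE, hvenorm]
    by_cases h : 0 ≤ c j'
    · rw [hξdef, if_pos h]; exact h1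
    · rw [hξdef, if_neg h]
      have h2 : vecNorm (-ofE ve) = vecNorm (ofE ve) := by
        simp [vecNorm, neg_sq]
      rw [h2]; exact h1
  · have hbase : (A + Su) *ᵥ ofE ve = lam j' • ofE ve := hmid j'
    by_cases h : 0 ≤ c j'
    · rw [hξdef, if_pos h]; exact hbase
    · rw [hξdef, if_neg h, Matrix.mulVec_neg, hbase, smul_neg]
  · have hveq : vecNorm (fun i => B i j) = Real.sqrt (μ j) := rfl
    have htoEy : toE (ξ - (vecNorm fun i => B i j)⁻¹ • fun i => B i j) = toE ξ - u0 j := by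
      rw [toE_sub]
      congr 1
    have hbbj : bb j' = u0 j := hbbmem j
    have hcjinner : ⟪u0 j, toE ξ⟫ = |c j'| := by
      by_cases h : 0 ≤ c j'
      · rw [hξdef, if_pos h, toE_ofE, ← hbbj, abs_of_nonneg h]
      · rw [hξdef, if_neg h, show toE (-ofE ve) = -ve from rfl, inner_neg_right, ← hbbj,
          abs_of_neg (lt_of_not_ge h)]
    have h1n : ‖toE ξ‖ = 1 := by
      by_cases h : 0 ≤ c j'
      · rw [hξdef, if_pos h, toE_ofE]; exact hvenorm
      · rw [hξdef, if_neg h, show toE (-ofE ve) = -ve from rfl, norm_neg]; exact hvenorm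
    have hnormsq : ‖toE ξ - u0 j‖ ^ 2 = 2 - 2 * |c j'| := by
      rw [norm_sub_sq_real]
      have h2 : ‖u0 j‖ = 1 := hu0.1 j
      have h3 : ⟪toE ξ, u0 j⟫ = |c j'| := by rw [real_inner_comm]; exact hcjinner
      rw [h1n, h2, h3]; ring
    have hfinal2 : ‖toE ξ - u0 j‖ ^ 2 ≤ 8 * ρ ^ 2 / δ ^ 2 := by
      rw [hnormsq]
      have hA1 : 2 - 2 * |c j'| ≤ 2 - 2 * c j' ^ 2 := by
        nlinarith [habs1, abs_nonneg (c j'), sq_abs (c j')]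
      have hA2 : 2 - 2 * c j' ^ 2 = 2 * s2 := by rw [hcj2]; ring
      have hA3 : 2 - 2 * |c j'| ≤ 2 * s2 := hA1.trans_eq hA2
      have hA4 : 2 * s2 ≤ 2 * (4 * ρ ^ 2 / δ ^ 2) := by linarith
      have hA5 : 2 * (4 * ρ ^ 2 / δ ^ 2) = 8 * ρ ^ 2 / δ ^ 2 := by ring
      linarith
    have hb : (0:ℝ) ≤ 2 * Real.sqrt 2 * ρ / δ := by positivity
    have hbsq : (2 * Real.sqrt 2 * ρ / δ) ^ 2 = 8 * ρ ^ 2 / δ ^ 2 := by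
      rw [div_pow, mul_pow, mul_pow, Real.sq_sqrt (by norm_num : (0:ℝ) ≤ 2)]
      ring
    have h5 : vecNorm (ξ - (vecNorm fun i => B i j)⁻¹ • fun i => B i j)
        = ‖toE ξ - u0 j‖ := by
      rw [← htoEy, normE, ofE_toE]
    rw [h5]
    calc ‖toE ξ - u0 j‖ = Real.sqrt (‖toE ξ - u0 j‖ ^ 2) :=
          (Real.sqrt_sq (norm_nonneg _)).symm
      _ ≤ Real.sqrt ((2 * Real.sqrt 2 * ρ / δ) ^ 2) :=
          Real.sqrt_le_sqrt (by rw [hbsq]; exact hfinal2)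
      _ = 2 * Real.sqrt 2 * ρ / δ := Real.sqrt_sq hb
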